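/- arXiv:2107.08164 — 3 statements merged into one kernel-verified Lean document; each statement's English description precedes it below -/
import Mathlib

section
/- (Correctness of the quantum collision detection protocol with a unique sender.) Let n ≥ 2 and j ∈ Fin n, and let ψ = X_{{j}} ψ_W be the n-qubit W state with a Pauli-X applied to qubit j. Then every bitstring x with ψ(x) ≠ 0 has Hamming weight 0 or 2; moreover the total Born-rule probability of outcomes of Hamming weight 0 equals 1/n and the total probability of outcomes of Hamming weight 2 equals (n−1)/n, so both weights occur with positive probability. -/
/-- Hamming weight of a bitstring. -/
def hammingWt {n : ℕ} (x : Fin n → ZMod 2) : ℕ :=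
  (Finset.univ.filter fun i => x i = 1).card

/-- The `n`-qubit W state: amplitude `1/√n` on each Hamming-weight-1 bitstring. -/
noncomputable def wState (n : ℕ) : EuclideanSpace ℂ (Fin n → ZMod 2) :=
  WithLp.toLp 2 (fun x => if hammingWt x = 1 then ((1 / Real.sqrt n : ℝ) : ℂ) else 0)

/-- Indicator bitstring of a set of qubits. -/
def chi {n : ℕ} (S : Finset (Fin n)) : Fin n → ZMod 2 :=
  fun i => if i ∈ S then 1 else 0

/-- Pauli-X flip on the qubits in `S`. -/
noncomputable def pauliX {n : ℕ} (S : Finset (Fin n))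
    (ψ : EuclideanSpace ℂ (Fin n → ZMod 2)) : EuclideanSpace ℂ (Fin n → ZMod 2) :=
  WithLp.toLp 2 (fun x => ψ (x + chi S))

/-- Bitstring with a single 1 in position `i`. -/
def eVec {n : ℕ} (i : Fin n) : Fin n → ZMod 2 :=
  fun j => if j = i then 1 else 0

lemma flip_apply {n : ℕ} (j : Fin n) (x : Fin n → ZMod 2) (i : Fin n) :
    (x + chi {j}) i = if i = j then x i + 1 else x i := by
  simp only [Pi.add_apply, chi, Finset.mem_singleton]
  split <;> simp

lemma wtSet_flip_zero {n : ℕ} (j : Fin n) (x : Fin n → ZMod 2) (h : x j = 0) :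
    (Finset.univ.filter fun i => (x + chi {j}) i = 1)
      = insert j (Finset.univ.filter fun i => x i = 1) := by
  ext i
  simp only [Finset.mem_filter, Finset.mem_insert, Finset.mem_univ, true_and, flip_apply]
  by_cases hij : i = j
  · subst hij; simp [h]
  · simp [hij]

lemma wtSet_flip_one {n : ℕ} (j : Fin n) (x : Fin n → ZMod 2) (h : x j = 1) :
    (Finset.univ.filter fun i => (x + chi {j}) i = 1)
      = (Finset.univ.filter fun i => x i = 1).erase j := by
  ext i
  simp only [Finset.mem_filter, Finset.mem_erase, Finset.mem_univ, true_and, flip_apply]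
  by_cases hij : i = j
  · subst hij; simp [h]
  · simp [hij]

lemma wt_flip_zero {n : ℕ} (j : Fin n) (x : Fin n → ZMod 2) (h : x j = 0) :
    hammingWt (x + chi {j}) = hammingWt x + 1 := by
  unfold hammingWt
  rw [wtSet_flip_zero j x h, Finset.card_insert_of_notMem]
  simp [h]

lemma wt_flip_one {n : ℕ} (j : Fin n) (x : Fin n → ZMod 2) (h : x j = 1) :
    hammingWt (x + chi {j}) + 1 = hammingWt x := by
  unfold hammingWt
  rw [wtSet_flip_one j x h, Finset.card_erase_add_one]
  simp [h]

lemma zmod2_em (a : ZMod 2) : a = 0 ∨ a = 1 := by revert a; decide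

lemma sq_amp (n : ℕ) (hn : 0 < n) :
    ‖(((1 / Real.sqrt n : ℝ) : ℂ))‖ ^ 2 = 1 / n := by
  rw [Complex.norm_real, Real.norm_eq_abs, abs_of_nonneg (by positivity), div_pow, one_pow,
    Real.sq_sqrt (by positivity)]

theorem stmt1 (n : ℕ) (hn : 2 ≤ n) (j : Fin n) :
    (∀ x : Fin n → ZMod 2, pauliX {j} (wState n) x ≠ 0 →
        hammingWt x = 0 ∨ hammingWt x = 2) ∧
    (∑ x ∈ Finset.univ.filter (fun x : Fin n → ZMod 2 => hammingWt x = 0),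
        ‖pauliX {j} (wState n) x‖ ^ 2 = (1 : ℝ) / n) ∧
    (∑ x ∈ Finset.univ.filter (fun x : Fin n → ZMod 2 => hammingWt x = 2),
        ‖pauliX {j} (wState n) x‖ ^ 2 = ((n : ℝ) - 1) / n) ∧
    (0 : ℝ) < (1 : ℝ) / n ∧ (0 : ℝ) < ((n : ℝ) - 1) / n := by
  have hn0 : 0 < n := by omega
  have hnR : (0:ℝ) < n := by exact_mod_cast hn0
  have hne1 : ∀ a : ZMod 2, a ≠ 1 → a = 0 := by decide
  -- Part 1
  have part1 : ∀ x : Fin n → ZMod 2, pauliX {j} (wState n) x ≠ 0 →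
      hammingWt x = 0 ∨ hammingWt x = 2 := by
    intro x hx
    have h1 : hammingWt (x + chi {j}) = 1 := by
      by_contra h
      apply hx
      simp [pauliX, wState, h]
    rcases zmod2_em (x j) with h | h
    · left
      have := wt_flip_zero j x h
      omega
    · right
      have := wt_flip_one j x h
      omega
  refine ⟨part1, ?_, ?_, by positivity, ?_⟩
  · -- weight 0
    have h0 : (Finset.univ.filter fun x : Fin n → ZMod 2 => hammingWt x = 0) = {0} := by
      ext x
      simp only [Finset.mem_filter, Finset.mem_univ, true_and, Finset.mem_singleton]
      constructor
      · intro h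
        funext i
        have hc : (Finset.univ.filter fun i => x i = 1) = ∅ :=
          Finset.card_eq_zero.mp h
        have : i ∉ (Finset.univ.filter fun i => x i = 1) := by rw [hc]; simp
        simp only [Finset.mem_filter, Finset.mem_univ, true_and] at this
        exact hne1 _ this
      · rintro rfl
        unfold hammingWt
        rw [Finset.card_eq_zero, Finset.filter_eq_empty_iff]
        intro i _
        simp
    rw [h0, Finset.sum_singleton]
    have hchi : hammingWt (0 + chi {j} : Fin n → ZMod 2) = 1 := by
      have : hammingWt (0 + chi {j} : Fin n → ZMod 2) = hammingWt (0 : Fin n → ZMod 2) + 1 := by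
        apply wt_flip_zero
        rfl
      rw [this]
      have : hammingWt (0 : Fin n → ZMod 2) = 0 := by
        unfold hammingWt
        rw [Finset.card_eq_zero, Finset.filter_eq_empty_iff]
        intro i _
        simp
      omega
    show ‖wState n (0 + chi {j})‖ ^ 2 = 1 / n
    rw [wState, WithLp.ofLp_toLp, if_pos hchi]
    exact sq_amp n hn0
  · -- weight 2
    have hamp : ∀ x ∈ Finset.univ.filter (fun x : Fin n → ZMod 2 => hammingWt x = 2),
        ‖pauliX {j} (wState n) x‖ ^ 2 = if x j = 1 then 1/(n:ℝ) else 0 := by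
      intro x hx
      simp only [Finset.mem_filter, Finset.mem_univ, true_and] at hx
      rcases zmod2_em (x j) with h | h
      · have hw := wt_flip_zero j x h
        have hne : x j ≠ 1 := by rw [h]; decide
        rw [if_neg hne]
        show ‖wState n (x + chi {j})‖ ^ 2 = 0
        rw [wState, WithLp.ofLp_toLp, if_neg (by omega)]
        simp
      · have hw := wt_flip_one j x h
        rw [if_pos h]
        show ‖wState n (x + chi {j})‖ ^ 2 = 1/(n:ℝ)
        rw [wState, WithLp.ofLp_toLp, if_pos (by omega)]
        exact sq_amp n hn0
    rw [Finset.sum_congr rfl hamp]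
    rw [← Finset.sum_filter]
    rw [Finset.sum_const]
    have hcard : ((Finset.univ.filter fun x : Fin n → ZMod 2 => hammingWt x = 2).filter
        fun x => x j = 1).card = n - 1 := by
      have := Finset.card_bij
        (i := fun (i : Fin n) (_ : i ∈ Finset.univ.erase j) =>
          (fun k => if k = i ∨ k = j then 1 else 0 : Fin n → ZMod 2))
        (s := Finset.univ.erase j)
        (t := (Finset.univ.filter fun x : Fin n → ZMod 2 => hammingWt x = 2).filter
          fun x => x j = 1)
        ?_ ?_ ?_
      · rw [← this, Finset.card_erase_of_mem (Finset.mem_univ j), Finset.card_univ,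
          Fintype.card_fin]
      · -- maps into the set
        intro i hi
        have hij : i ≠ j := (Finset.mem_erase.mp hi).1
        simp only [Finset.mem_filter, Finset.mem_univ, true_and]
        refine ⟨?_, by simp⟩
        unfold hammingWt
        have hset : (Finset.univ.filter fun k =>
            (if k = i ∨ k = j then (1:ZMod 2) else 0) = 1) = {i, j} := by
          ext k
          simp only [Finset.mem_filter, Finset.mem_univ, true_and, Finset.mem_insert,
            Finset.mem_singleton]
          by_cases hk : k = i ∨ k = j
          · simp [hk]
          · simp [hk]
        rw [hset, Finset.card_pair hij]
      · -- injective
        intro a ha b hb hab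
        have haj : a ≠ j := (Finset.mem_erase.mp ha).1
        by_contra hne
        have h1 : (if a = a ∨ a = j then (1:ZMod 2) else 0)
            = (if a = b ∨ a = j then (1:ZMod 2) else 0) := congrFun hab a
        rw [if_pos (Or.inl rfl), if_neg (by tauto)] at h1
        exact absurd h1 (by decide)
      · -- surjective
        intro x hx
        simp only [Finset.mem_filter, Finset.mem_univ, true_and] at hx
        obtain ⟨hw2, hxj⟩ := hx
        have hjmem : j ∈ Finset.univ.filter fun k => x k = 1 := by simp [hxj]
        have hcard1 : ((Finset.univ.filter fun k => x k = 1).erase j).card = 1 := by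
          have := Finset.card_erase_of_mem hjmem
          unfold hammingWt at hw2
          omega
        obtain ⟨i, hi⟩ := Finset.card_eq_one.mp hcard1
        have himem : i ∈ (Finset.univ.filter fun k => x k = 1).erase j := by
          rw [hi]; exact Finset.mem_singleton_self i
        have hij : i ≠ j := (Finset.mem_erase.mp himem).1
        have hxi : x i = 1 := by
          have := (Finset.mem_erase.mp himem).2
          simpa using this
        refine ⟨i, Finset.mem_erase.mpr ⟨hij, Finset.mem_univ i⟩, ?_⟩
        funext k
        show (if k = i ∨ k = j then (1:ZMod 2) else 0) = x k
        by_cases hk : k = i ∨ k = j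
        · rw [if_pos hk]
          rcases hk with rfl | rfl
          · exact hxi.symm
          · exact hxj.symm
        · rw [if_neg hk]
          push_neg at hk
          rcases zmod2_em (x k) with h0 | h1
          · exact h0.symm
          · exfalso
            have hkm : k ∈ (Finset.univ.filter fun m => x m = 1).erase j :=
              Finset.mem_erase.mpr ⟨hk.2, by simp [h1]⟩
            rw [hi] at hkm
            exact hk.1 (Finset.mem_singleton.mp hkm)
    rw [hcard, nsmul_eq_mul]
    have h1n : (1:ℕ) ≤ n := le_trans one_le_two hn
    rw [Nat.cast_sub h1n, Nat.cast_one, mul_one_div]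
  · have : (1:ℝ) ≤ (n:ℝ) - 1 := by
      have : (2:ℝ) ≤ n := by exact_mod_cast hn
      linarith
    positivity
end

section
/- (The collision detection protocol counts the number of senders.) Let n ≥ 2, let S ⊆ Fin n, and let i be a natural number with i + 2 ≤ n. If under the state X_S ψ_W there exists an outcome of Hamming weight i with positive Born-rule probability and also an outcome of Hamming weight i+2 with positive Born-rule probability, then |S| = i + 1. -/
lemma key_wt {n : ℕ} (S : Finset (Fin n)) (x : Fin n → ZMod 2)
    (h : hammingWt (x + chi S) = 1) :
    hammingWt x + 1 = S.card ∨ hammingWt x = S.card + 1 := by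
  obtain ⟨j, hj⟩ := Finset.card_eq_one.mp h
  have hiff : ∀ i, ((x + chi S) i = 1) ↔ i = j := by
    intro i
    constructor
    · intro hi
      have hmem : i ∈ Finset.filter (fun i => (x + chi S) i = 1) Finset.univ :=
        Finset.mem_filter.mpr ⟨Finset.mem_univ i, hi⟩
      rw [hj] at hmem
      exact Finset.mem_singleton.mp hmem
    · intro hi; subst hi
      have hmem : i ∈ Finset.filter (fun i => (x + chi S) i = 1) Finset.univ := by
        rw [hj]; exact Finset.mem_singleton_self i
      exact (Finset.mem_filter.mp hmem).2
  have h01 : ∀ a : ZMod 2, a = 0 ∨ a = 1 := by decide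
  have hadd : ∀ a : ZMod 2, a + a = 0 := by decide
  have hx : ∀ i, x i = (x + chi S) i + chi S i := by
    intro i
    simp only [Pi.add_apply, add_assoc, hadd, add_zero]
  have hset : Finset.univ.filter (fun i => x i = 1) =
      if j ∈ S then S.erase j else insert j S := by
    ext i
    simp only [Finset.mem_filter, Finset.mem_univ, true_and]
    rw [hx i]
    by_cases hij : i = j
    · subst hij
      rw [(hiff i).mpr rfl]
      by_cases hiS : i ∈ S
      · simp [chi, hiS, Finset.mem_erase]
      · simp [chi, hiS]
    · have hv : (x + chi S) i = 0 := by
        rcases h01 ((x + chi S) i) with h0 | h0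
        · exact h0
        · exact absurd ((hiff i).mp h0) hij
      rw [hv, zero_add]
      by_cases hjS : j ∈ S
      · by_cases hiS : i ∈ S
        · simp [chi, hiS, hjS, Finset.mem_erase, hij]
        · simp [chi, hiS, hjS, Finset.mem_erase, hij]
      · by_cases hiS : i ∈ S
        · simp [chi, hiS, hjS, Finset.mem_insert, hij]
        · simp [chi, hiS, hjS, Finset.mem_insert, hij]
  unfold hammingWt
  rw [hset]
  by_cases hjS : j ∈ S
  · left
    rw [if_pos hjS, Finset.card_erase_of_mem hjS]
    have : 1 ≤ S.card := Finset.card_pos.mpr ⟨j, hjS⟩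
    omega
  · right
    rw [if_neg hjS, Finset.card_insert_of_notMem hjS]

lemma wt_one_of_pos {n : ℕ} (S : Finset (Fin n)) (x : Fin n → ZMod 2)
    (h : 0 < ‖pauliX S (wState n) x‖ ^ 2) :
    hammingWt (x + chi S) = 1 := by
  by_contra hne
  have : pauliX S (wState n) x = 0 := by
    simp [pauliX, wState, hne]
  rw [this] at h
  simp at h

theorem stmt3 (n : ℕ) (hn : 2 ≤ n) (S : Finset (Fin n)) (i : ℕ) (hi : i + 2 ≤ n)
    (h1 : ∃ x : Fin n → ZMod 2, hammingWt x = i ∧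
        0 < ‖pauliX S (wState n) x‖ ^ 2)
    (h2 : ∃ x : Fin n → ZMod 2, hammingWt x = i + 2 ∧
        0 < ‖pauliX S (wState n) x‖ ^ 2) :
    S.card = i + 1 := by
  obtain ⟨x, hxw, hxp⟩ := h1
  obtain ⟨y, hyw, hyp⟩ := h2
  have hx1 := key_wt S x (wt_one_of_pos S x hxp)
  have hy1 := key_wt S y (wt_one_of_pos S y hyp)
  rw [hxw] at hx1
  rw [hyw] at hy1
  omega
end

section
/- (Post-measurement state of the anonymous entanglement protocol is an EPR pair.) Let n ≥ 2 and let s, r ∈ Fin n be distinct. Let P be the orthogonal projection of EuclideanSpace ℂ (Fin n → ZMod 2) onto the span of the computational-basis vectors |x⟩ with x_j = 0 for all j ∉ {s,r}. Then P ψ_W = (1/√n)(|e_s⟩ + |e_r⟩), where e_s and e_r are the bitstrings with a single 1 at position s and r respectively; its norm is √(2/n), and the normalized post-measurement state ‖Pψ_W‖⁻¹ • Pψ_W is the vector with amplitude 1/√2 on each of e_s and e_r and amplitude 0 elsewhere, i.e., the maximally entangled pair (|01⟩_{sr} + |10⟩_{sr})/√2 shared between s and r. -/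
lemma zmod2_cases : ∀ a : ZMod 2, a = 0 ∨ a = 1 := by decide

lemma eVec_ne {n : ℕ} {s r : Fin n} (h : s ≠ r) : eVec s ≠ eVec r := by
  intro he
  have := congrFun he s
  simp [eVec, h] at this

lemma hammingWt_eVec {n : ℕ} (i : Fin n) : hammingWt (eVec i) = 1 := by
  unfold hammingWt
  have : Finset.univ.filter (fun j => eVec i j = 1) = {i} := by
    ext j
    simp only [Finset.mem_filter, Finset.mem_univ, true_and, Finset.mem_singleton, eVec]
    constructor
    · intro hj; by_contra hji; simp [hji] at hj
    · intro hj; simp [hj]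
  rw [this, Finset.card_singleton]

lemma hval {n : ℕ} {s r : Fin n} (hsr : s ≠ r) (x : Fin n → ZMod 2)
    (hx : ∀ j, j ≠ s → j ≠ r → x j = 0) :
    wState n x = (((1 / Real.sqrt n : ℝ) : ℂ) •
      (EuclideanSpace.single (eVec s) (1 : ℂ) + EuclideanSpace.single (eVec r) (1 : ℂ))) x := by
  have happ : ∀ (y : Fin n → ZMod 2),
      (((1 / Real.sqrt n : ℝ) : ℂ) •
        (EuclideanSpace.single (eVec s) (1 : ℂ) + EuclideanSpace.single (eVec r) (1 : ℂ))) y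
      = ((1 / Real.sqrt n : ℝ) : ℂ) *
          ((if y = eVec s then 1 else 0) + (if y = eVec r then 1 else 0)) := by
    intro y
    simp [EuclideanSpace.single_apply, mul_add]
  rw [happ]
  rcases zmod2_cases (x s) with hs | hs <;> rcases zmod2_cases (x r) with hr | hr
  · -- x = 0
    have hx0 : ∀ j, x j = 0 := by
      intro j
      by_cases h1 : j = s
      · rw [h1]; exact hs
      · by_cases h2 : j = r
        · rw [h2]; exact hr
        · exact hx j h1 h2
    have hwt : hammingWt x = 0 := by
      unfold hammingWt
      rw [Finset.card_eq_zero]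
      ext j; simp [hx0 j]
    have hxs : x ≠ eVec s := by
      intro he; have := congrFun he s; rw [hx0 s] at this; simp [eVec] at this
    have hxr : x ≠ eVec r := by
      intro he; have := congrFun he r; rw [hx0 r] at this; simp [eVec] at this
    simp [wState, hwt, hxs, hxr]
  · -- x = eVec r
    have hxe : x = eVec r := by
      funext j
      by_cases h1 : j = r
      · simp [h1, eVec, hr]
      · by_cases h2 : j = s
        · subst h2; simp [eVec, h1, hs]
        · simp [eVec, h1, hx j h2 h1]
    subst hxe
    simp [wState, hammingWt_eVec, (eVec_ne hsr).symm]
  · -- x = eVec s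
    have hxe : x = eVec s := by
      funext j
      by_cases h1 : j = s
      · simp [h1, eVec, hs]
      · by_cases h2 : j = r
        · subst h2; simp [eVec, h1, hr]
        · simp [eVec, h1, hx j h1 h2]
    subst hxe
    simp [wState, hammingWt_eVec, eVec_ne hsr]
  · -- x = eVec s + eVec r
    have hwt : hammingWt x = 2 := by
      unfold hammingWt
      have : Finset.univ.filter (fun j => x j = 1) = {s, r} := by
        ext j
        simp only [Finset.mem_filter, Finset.mem_univ, true_and, Finset.mem_insert,
          Finset.mem_singleton]
        constructor
        · intro hj; by_contra hc; push_neg at hc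
          rw [hx j hc.1 hc.2] at hj; exact absurd hj (by decide)
        · rintro (h | h) <;> subst h <;> assumption
      rw [this, Finset.card_insert_of_notMem (by simpa using hsr), Finset.card_singleton]
    have hxs : x ≠ eVec s := by
      intro he; have := congrFun he r; rw [hr] at this
      simp [eVec, Ne.symm hsr] at this
    have hxr : x ≠ eVec r := by
      intro he; have := congrFun he s; rw [hs] at this
      simp [eVec, hsr] at this
    simp [wState, hwt, hxs, hxr]

theorem stmt8 (n : ℕ) (hn : 2 ≤ n) (s r : Fin n) (hsr : s ≠ r)
    (K : Submodule ℂ (EuclideanSpace ℂ (Fin n → ZMod 2)))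
    (hK : K = Submodule.span ℂ {v | ∃ x : Fin n → ZMod 2,
        (∀ j, j ≠ s → j ≠ r → x j = 0) ∧ v = EuclideanSpace.single x (1 : ℂ)}) :
    ((Submodule.orthogonalProjection K (wState n) : EuclideanSpace ℂ (Fin n → ZMod 2)) =
        ((1 / Real.sqrt n : ℝ) : ℂ) •
          (EuclideanSpace.single (eVec s) (1 : ℂ) +
            EuclideanSpace.single (eVec r) (1 : ℂ))) ∧
    (‖(Submodule.orthogonalProjection K (wState n) : EuclideanSpace ℂ (Fin n → ZMod 2))‖ =
        Real.sqrt (2 / n)) ∧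
    (∀ x : Fin n → ZMod 2,
      (‖(Submodule.orthogonalProjection K (wState n) : EuclideanSpace ℂ (Fin n → ZMod 2))‖⁻¹ •
        (Submodule.orthogonalProjection K (wState n) : EuclideanSpace ℂ (Fin n → ZMod 2))) x =
      if x = eVec s ∨ x = eVec r then ((1 / Real.sqrt 2 : ℝ) : ℂ) else 0) := by
  have hn0 : (0 : ℝ) < n := by positivity
  have hsn : (0 : ℝ) < Real.sqrt n := Real.sqrt_pos.2 hn0
  set v : EuclideanSpace ℂ (Fin n → ZMod 2) :=
    ((1 / Real.sqrt n : ℝ) : ℂ) •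
      (EuclideanSpace.single (eVec s) (1 : ℂ) + EuclideanSpace.single (eVec r) (1 : ℂ)) with hv
  -- membership of v in K
  have hvK : v ∈ K := by
    rw [hK]
    refine Submodule.smul_mem _ _ (Submodule.add_mem _ ?_ ?_) <;>
      apply Submodule.subset_span
    · exact ⟨eVec s, fun j h1 h2 => by simp [eVec, h1], rfl⟩
    · exact ⟨eVec r, fun j h1 h2 => by simp [eVec, h2], rfl⟩
  -- projection equals v
  have hproj : (Submodule.orthogonalProjection K (wState n) : EuclideanSpace ℂ (Fin n → ZMod 2)) = v := by
    rw [← Submodule.starProjection_apply]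
    refine Submodule.eq_starProjection_of_mem_of_inner_eq_zero hvK ?_
    intro w hw
    rw [hK] at hw
    induction hw using Submodule.span_induction with
    | mem w hw =>
      obtain ⟨x, hx, rfl⟩ := hw
      rw [EuclideanSpace.inner_single_right]
      have hvx : wState n x = v x := by rw [hv]; exact hval hsr x hx
      have hsub : (wState n - v) x = wState n x - v x := rfl
      rw [hsub, hvx, sub_self]
      simp
    | zero => simp
    | add a b _ _ ha hb => rw [inner_add_right, ha, hb, add_zero]
    | smul c a _ ha => rw [inner_smul_right, ha, mul_zero]
  -- norm computation
  have hinner : (inner ℂ (EuclideanSpace.single (eVec s) (1 : ℂ))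
      (EuclideanSpace.single (eVec r) (1 : ℂ)) : ℂ) = 0 := by
    rw [EuclideanSpace.inner_single_left]
    simp [EuclideanSpace.single_apply, eVec_ne hsr]
  have hnorm2 : ‖(EuclideanSpace.single (eVec s) (1 : ℂ) +
      EuclideanSpace.single (eVec r) (1 : ℂ) : EuclideanSpace ℂ (Fin n → ZMod 2))‖
      = Real.sqrt 2 := by
    have h := norm_add_sq (𝕜 := ℂ) (EuclideanSpace.single (eVec s) (1 : ℂ))
      (EuclideanSpace.single (eVec r) (1 : ℂ))
    rw [hinner] at h
    simp [EuclideanSpace.norm_single] at h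
    rw [← Real.sqrt_sq (norm_nonneg _), h]; norm_num
  have hnv : ‖v‖ = Real.sqrt (2 / n) := by
    rw [hv, norm_smul, hnorm2]
    rw [Complex.norm_real, Real.norm_eq_abs, abs_of_nonneg (by positivity)]
    rw [Real.sqrt_div (by norm_num : (0:ℝ) ≤ 2)]
    ring
  refine ⟨hproj, by rw [hproj, hnv], ?_⟩
  intro x
  rw [hproj, hnv]
  have hsmul : ((Real.sqrt (2 / n))⁻¹ • v) x = ((Real.sqrt (2 / n))⁻¹ : ℝ) • (v x) := rfl
  rw [hsmul, hv]
  have happ : (((1 / Real.sqrt n : ℝ) : ℂ) •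
      (EuclideanSpace.single (eVec s) (1 : ℂ) + EuclideanSpace.single (eVec r) (1 : ℂ))) x
      = ((1 / Real.sqrt n : ℝ) : ℂ) *
          ((if x = eVec s then 1 else 0) + (if x = eVec r then 1 else 0)) := by
    simp [EuclideanSpace.single_apply, mul_add]
  rw [happ]
  have hkey : (Real.sqrt (2 / n))⁻¹ * (1 / Real.sqrt n) = 1 / Real.sqrt 2 := by
    rw [Real.sqrt_div (by norm_num : (0:ℝ) ≤ 2)]
    have h2 : (0:ℝ) < Real.sqrt 2 := Real.sqrt_pos.2 (by norm_num)
    field_simp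
  by_cases h1 : x = eVec s
  · have h2 : x ≠ eVec r := by rw [h1]; exact eVec_ne hsr
    rw [if_pos h1, if_neg h2, if_pos (Or.inl h1)]
    rw [Complex.real_smul]
    push_cast [← hkey]
    ring
  · by_cases h2 : x = eVec r
    · rw [if_neg h1, if_pos h2, if_pos (Or.inr h2)]
      rw [Complex.real_smul]
      push_cast [← hkey]
      ring
    · rw [if_neg h1, if_neg h2, if_neg (by tauto)]
      simp
end
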